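/- Let H be a Hilbert space, Y a closed subspace of H × H with orthogonal projection P_Y onto Y and P_{Y^⊥} onto its orthogonal complement, and let λ > 0 with √λ ∈ (0, π). Then a pair (A,B) ∈ H × H satisfies P_{Y^⊥}(A, A·cos√λ + B·sin√λ) = 0 and P_Y(B, A·sin√λ − B·cos√λ) = 0 if and only if the pair (B,A) satisfies P_Y(B, B·cos√μ + A·sin√μ) = 0 and P_{Y^⊥}(A, B·sin√μ − A·cos√μ) = 0, where μ = (π − √λ)². -/

import Mathlib

theorem stmt_2 {H : Type*} [NormedAddCommGroup H] [InnerProductSpace ℂ H] [CompleteSpace H]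
    (Y : Submodule ℂ (WithLp 2 (H × H)))
    (hY : IsClosed (Y : Set (WithLp 2 (H × H)))) [CompleteSpace Y] [CompleteSpace Yᗮ]
    (l : ℝ) (hl : 0 < Real.sqrt l) (hl' : Real.sqrt l < Real.pi) (A B : H) :
    let c : ℂ := (Real.cos (Real.sqrt l) : ℝ)
    let s : ℂ := (Real.sin (Real.sqrt l) : ℝ)
    let μ : ℝ := (Real.pi - Real.sqrt l) ^ 2
    let cμ : ℂ := (Real.cos (Real.sqrt μ) : ℝ)
    let sμ : ℂ := (Real.sin (Real.sqrt μ) : ℝ)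
    ((Submodule.orthogonalProjectionOnto Yᗮ ((WithLp.equiv 2 (H × H)).symm (A, c • A + s • B)) = 0 ∧
      Submodule.orthogonalProjectionOnto Y ((WithLp.equiv 2 (H × H)).symm (B, s • A - c • B)) = 0) ↔
     (Submodule.orthogonalProjectionOnto Y ((WithLp.equiv 2 (H × H)).symm (B, cμ • B + sμ • A)) = 0 ∧
      Submodule.orthogonalProjectionOnto Yᗮ ((WithLp.equiv 2 (H × H)).symm (A, sμ • B - cμ • A)) = 0)) := by
  intro c s μ cμ sμ
  have hsq : Real.sqrt μ = Real.pi - Real.sqrt l := Real.sqrt_sq (by linarith)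
  have hc : cμ = -c := by
    simp only [cμ, c, hsq, Real.cos_pi_sub, Complex.ofReal_neg]
  have hs : sμ = s := by
    simp only [sμ, s, hsq, Real.sin_pi_sub]
  have e1 : cμ • B + sμ • A = s • A - c • B := by rw [hc, hs]; module
  have e2 : sμ • B - cμ • A = c • A + s • B := by rw [hc, hs]; module
  rw [e1, e2]
  exact ⟨fun ⟨h1, h2⟩ => ⟨h2, h1⟩, fun ⟨h1, h2⟩ => ⟨h2, h1⟩⟩
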